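/- Let λ be a real number and d a positive integer with 0 < λ < d. Then the Poisson tail probability satisfies ∑_{j=d+1}^{∞} e^{−λ} λ^j / j! ≤ e^{d−λ} · (λ/d)^d. -/

import Mathlib

/-- For `0 < λ < d`, the Poisson tail satisfies
`∑_{j > d} e^{−λ} λ^j / j! ≤ e^{d−λ} (λ/d)^d`. -/
theorem poisson_tail_bound (lam : ℝ) (d : ℕ) (hd : 0 < d) (hlam : 0 < lam) (hlt : lam < d) :
    (∑' j : ℕ, Real.exp (-lam) * lam ^ (j + d + 1) / (Nat.factorial (j + d + 1))) ≤
      Real.exp ((d : ℝ) - lam) * (lam / d) ^ d := by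
  have hd' : (0:ℝ) < d := by exact_mod_cast hd
  have hinj : Function.Injective (fun k : ℕ => k + (d + 1)) := add_left_injective (d + 1)
  have hS : Summable (fun n : ℕ => (d:ℝ) ^ n / n.factorial) :=
    Real.summable_pow_div_factorial d
  have hSlam : Summable (fun n : ℕ => lam ^ n / n.factorial) :=
    Real.summable_pow_div_factorial lam
  have hSlam' : Summable (fun k : ℕ => lam ^ (k + d + 1) / (Nat.factorial (k + d + 1) : ℝ)) := by
    have := hSlam.comp_injective hinj
    simpa [Function.comp_def, add_assoc] using this
  have hf : Summable (fun k : ℕ =>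
      Real.exp (-lam) * lam ^ (k + d + 1) / (Nat.factorial (k + d + 1) : ℝ)) := by
    simpa [mul_div_assoc] using hSlam'.mul_left (Real.exp (-lam))
  have hSd' : Summable (fun k : ℕ => (d:ℝ) ^ (k + d + 1) / (Nat.factorial (k + d + 1) : ℝ)) := by
    have := hS.comp_injective hinj
    simpa [Function.comp_def, add_assoc] using this
  -- termwise bound
  have hterm : ∀ k : ℕ,
      Real.exp (-lam) * lam ^ (k + d + 1) / (Nat.factorial (k + d + 1) : ℝ) ≤
        Real.exp (-lam) * (lam / d) ^ d *
          ((d:ℝ) ^ (k + d + 1) / (Nat.factorial (k + d + 1) : ℝ)) := by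
    intro k
    have hpow : lam ^ (k + d + 1) ≤ (lam / d) ^ d * (d:ℝ) ^ (k + d + 1) := by
      have e1 : k + d + 1 = d + (k + 1) := by omega
      rw [e1, pow_add lam d (k+1), pow_add (d:ℝ) d (k+1), div_pow,
        div_mul_eq_mul_div, le_div_iff₀ (by positivity)]
      have h1 : lam ^ (k+1) ≤ (d:ℝ) ^ (k+1) := pow_le_pow_left₀ hlam.le hlt.le _
      calc lam ^ d * lam ^ (k+1) * (d:ℝ) ^ d
          ≤ lam ^ d * (d:ℝ) ^ (k+1) * (d:ℝ) ^ d := by gcongr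
        _ = lam ^ d * ((d:ℝ) ^ d * (d:ℝ) ^ (k+1)) := by ring
    rw [mul_div_assoc, mul_assoc, ← mul_div_assoc ((lam/(d:ℝ))^d)]
    gcongr
  -- tail of d-series bounded by exp d
  have hkey : (∑' k : ℕ, (d:ℝ) ^ (k + d + 1) / (Nat.factorial (k + d + 1) : ℝ)) ≤
      Real.exp d := by
    have hexp : Real.exp (d:ℝ) = ∑' n : ℕ, (d:ℝ) ^ n / (n.factorial : ℝ) := by
      rw [Real.exp_eq_exp_ℝ, NormedSpace.exp_eq_tsum_div]
    rw [hexp]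
    refine hSd'.tsum_le_tsum_of_inj (fun k => k + (d + 1)) hinj
      (fun c _ => by positivity) (fun k => ?_) hS
    simp [add_assoc]
  calc (∑' k : ℕ, Real.exp (-lam) * lam ^ (k + d + 1) / (Nat.factorial (k + d + 1) : ℝ))
      ≤ ∑' k : ℕ, Real.exp (-lam) * (lam / d) ^ d *
          ((d:ℝ) ^ (k + d + 1) / (Nat.factorial (k + d + 1) : ℝ)) :=
        hf.tsum_le_tsum hterm (hSd'.mul_left _)
    _ = Real.exp (-lam) * (lam / d) ^ d *
          ∑' k : ℕ, ((d:ℝ) ^ (k + d + 1) / (Nat.factorial (k + d + 1) : ℝ)) := by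
        rw [tsum_mul_left]
    _ ≤ Real.exp (-lam) * (lam / d) ^ d * Real.exp d := by
        gcongr
    _ = Real.exp ((d:ℝ) - lam) * (lam / d) ^ d := by
        rw [Real.exp_sub]
        rw [Real.exp_neg]
        field_simp
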